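/- Concavity of the impurity along a line segment: let p, δ : Fin N → ℝ be such that for every t ∈ [0,1] the vector p + t•δ is componentwise nonnegative and has ∑ n, (p n + t·δ n) > 0. Then the function t ↦ F(p + t•δ) is concave on [0,1]. -/

import Mathlib

def simplex (N : ℕ) : Set (Fin N → ℝ) := {q | (∀ n, 0 ≤ q n) ∧ ∑ n, q n = 1}

/-- `f` is concave on the standard probability simplex. -/
def ConcaveOnSimplex {N : ℕ} (f : (Fin N → ℝ) → ℝ) : Prop :=
  ∀ a ∈ simplex N, ∀ b ∈ simplex N, ∀ lam : ℝ, lam ∈ Set.Icc (0:ℝ) 1 →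
    lam * f a + (1 - lam) * f b ≤ f (lam • a + (1 - lam) • b)

/-- The impurity functional `F(v) = (∑ n, v n) * f (v / ∑ n, v n)`. -/
noncomputable def impurity {N : ℕ} (f : (Fin N → ℝ) → ℝ) (v : Fin N → ℝ) : ℝ :=
  (∑ n, v n) * f (fun n => v n / ∑ m, v m)

/-- Concavity of the impurity along a line segment. -/
theorem stmt_3 {N : ℕ} (hN : 1 ≤ N) (f : (Fin N → ℝ) → ℝ) (hf : ConcaveOnSimplex f)
    (p δ : Fin N → ℝ)
    (hpos : ∀ t ∈ Set.Icc (0:ℝ) 1,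
      (∀ n, 0 ≤ p n + t * δ n) ∧ 0 < ∑ n, (p n + t * δ n)) :
    ConcaveOn ℝ (Set.Icc (0:ℝ) 1) (fun t : ℝ => impurity f (p + t • δ)) := by
  refine ⟨convex_Icc 0 1, ?_⟩
  intro x hx y hy a b ha hb hab
  obtain ⟨hx1, hx2⟩ := hpos x hx
  obtain ⟨hy1, hy2⟩ := hpos y hy
  have htI : a • x + b • y ∈ Set.Icc (0:ℝ) 1 := (convex_Icc 0 1) hx hy ha hb hab
  obtain ⟨ht1, ht2⟩ := hpos _ htI
  simp only [smul_eq_mul] at *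
  set s1 := ∑ n, (p n + x * δ n) with hs1
  set s2 := ∑ n, (p n + y * δ n) with hs2
  set s := ∑ n, (p n + (a * x + b * y) * δ n) with hs
  have hskey : s = a * s1 + b * s2 := by
    simp only [hs1, hs2, hs, Finset.sum_add_distrib, ← Finset.mul_sum]
    linear_combination (-(∑ n, p n)) * hab
  set q1 : Fin N → ℝ := fun n => (p n + x * δ n) / s1 with hq1def
  set q2 : Fin N → ℝ := fun n => (p n + y * δ n) / s2 with hq2def
  have hq1 : q1 ∈ simplex N :=
    ⟨fun n => div_nonneg (hx1 n) hx2.le, by rw [← Finset.sum_div, div_self hx2.ne']⟩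
  have hq2 : q2 ∈ simplex N :=
    ⟨fun n => div_nonneg (hy1 n) hy2.le, by rw [← Finset.sum_div, div_self hy2.ne']⟩
  set μ : ℝ := a * s1 / s with hμdef
  have hμ : μ ∈ Set.Icc (0:ℝ) 1 := by
    constructor
    · exact div_nonneg (mul_nonneg ha hx2.le) ht2.le
    · rw [div_le_one ht2]
      nlinarith [mul_nonneg hb hy2.le]
  have key := hf q1 hq1 q2 hq2 μ hμ
  have hcomb : (fun n => (p n + (a * x + b * y) * δ n) / s) = μ • q1 + (1 - μ) • q2 := by
    funext n
    have h1μ : 1 - μ = b * s2 / s := by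
      rw [hμdef]
      field_simp
      linarith [hskey]
    simp only [Pi.add_apply, Pi.smul_apply, smul_eq_mul, hq1def, hq2def, h1μ, hμdef]
    have hv : p n + (a * x + b * y) * δ n = a * (p n + x * δ n) + b * (p n + y * δ n) := by
      linear_combination (-(p n)) * hab
    rw [hv]
    field_simp
    linear_combination (-(p n + y * δ n)) * hskey
  simp only [impurity, Pi.add_apply, Pi.smul_apply, smul_eq_mul, ← hs1, ← hs2, ← hs]
  rw [hcomb] at *
  have hmul : s * (μ * f q1 + (1 - μ) * f q2) ≤ s * f (μ • q1 + (1 - μ) • q2) :=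
    mul_le_mul_of_nonneg_left key ht2.le
  have e1 : s * μ = a * s1 := by
    rw [hμdef]; field_simp
  have e2 : s * (1 - μ) = b * s2 := by
    rw [hμdef]; field_simp; linarith [hskey]
  calc a * (s1 * f q1) + b * (s2 * f q2)
      = s * (μ * f q1 + (1 - μ) * f q2) := by linear_combination (-f q1) * e1 + (-f q2) * e2
    _ ≤ s * f (μ • q1 + (1 - μ) • q2) := hmul
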